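/- Let k and a be integers with k ≥ 3 and a ≥ 1, and let H be a graph of order a(k−1) such that the sum over all vertices x of H of ⌈(deg_H(x) − 1)/(k−1)⌉ is at most a − 2. Then H has a proper colouring with a colours such that each colour class has exactly k − 1 vertices. -/

import Mathlib

open Finset


lemma indep_pick {V : Type} [Fintype V] [DecidableEq V] (H : SimpleGraph V) [DecidableRel H.Adj] :
    ∀ (t : ℕ) (L : Finset V), (∀ x ∈ L, H.degree x ≤ 1) → 2 * t ≤ L.card + 1 →
    ∃ T, T ⊆ L ∧ T.card = t ∧ ∀ x ∈ T, ∀ y ∈ T, ¬H.Adj x y := by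
  intro t
  induction t with
  | zero => exact fun L _ _ => ⟨∅, empty_subset _, rfl, by simp⟩
  | succ t ih =>
    intro L hL hcard
    have hLne : L.Nonempty := by rw [← Finset.card_pos]; omega
    obtain ⟨v, hv⟩ := hLne
    set L' := (L.erase v) \ H.neighborFinset v with hL'
    have hsub : L' ⊆ L := (Finset.sdiff_subset).trans (Finset.erase_subset _ _)
    have hcard' : 2 * t ≤ L'.card + 1 := by
      have h1 : (L.erase v).card = L.card - 1 := Finset.card_erase_of_mem hv
      have h2 : (L.erase v).card - (H.neighborFinset v).card ≤ L'.card :=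
        Finset.le_card_sdiff _ _
      have h3 : (H.neighborFinset v).card ≤ 1 := by
        rw [SimpleGraph.card_neighborFinset_eq_degree]
        exact hL v hv
      omega
    obtain ⟨T, hTsub, hTcard, hTind⟩ := ih L' (fun x hx => hL x (hsub hx)) hcard'
    have hvT : v ∉ T := by
      intro hvT
      have := hTsub hvT
      rw [hL', Finset.mem_sdiff, Finset.mem_erase] at this
      exact this.1.1 rfl
    refine ⟨insert v T, Finset.insert_subset hv (hTsub.trans hsub), ?_, ?_⟩
    · rw [Finset.card_insert_of_notMem hvT, hTcard]
    · have hnb : ∀ z ∈ T, ¬H.Adj v z := by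
        intro z hz hadj
        have := hTsub hz
        rw [hL', Finset.mem_sdiff] at this
        exact this.2 ((H.mem_neighborFinset _ _).mpr hadj)
      intro x hx y hy hadj
      rcases Finset.mem_insert.1 hx with hx' | hx'
      · rcases Finset.mem_insert.1 hy with hy' | hy'
        · exact H.irrefl (hx' ▸ hy' ▸ hadj)
        · exact hnb y hy' (hx' ▸ hadj)
      · rcases Finset.mem_insert.1 hy with hy' | hy'
        · exact hnb x hx' (hy' ▸ hadj).symm
        · exact hTind x hx' y hy' hadj


lemma extend_coloring {V : Type} [Fintype V] [DecidableEq V] (H : SimpleGraph V) [DecidableRel H.Adj]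
    (b r : ℕ) (S : Finset V) (hScard : S.card = r)
    (hSind : ∀ x ∈ S, ∀ y ∈ S, ¬H.Adj x y)
    (φ' : {x : V // x ∈ Sᶜ} → Fin b)
    (hproper : ∀ x y : {x : V // x ∈ Sᶜ}, H.Adj x.val y.val → φ' x ≠ φ' y)
    (hclass : ∀ c : Fin b, (Finset.univ.filter (fun x => φ' x = c)).card = r) :
    ∃ φ : V → Fin (b+1), (∀ x y, H.Adj x y → φ x ≠ φ y) ∧
      ∀ c : Fin (b+1), (Finset.univ.filter (fun x => φ x = c)).card = r := by
  classical
  have hmem : ∀ {v : V}, v ∉ S → v ∈ Sᶜ := fun h => Finset.mem_compl.mpr h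
  refine ⟨fun v => if h : v ∈ S then Fin.last b else (φ' ⟨v, hmem h⟩).castSucc, ?_, ?_⟩
  · intro x y hadj
    by_cases hx : x ∈ S <;> by_cases hy : y ∈ S <;> simp only [hx, hy, dif_pos, dif_neg,
      not_false_iff]
    · exact absurd hadj (hSind x hx y hy)
    · exact fun h => absurd h.symm (Fin.castSucc_lt_last _).ne
    · exact fun h => absurd h (Fin.castSucc_lt_last _).ne
    · intro h
      exact hproper ⟨x, hmem hx⟩ ⟨y, hmem hy⟩ hadj (Fin.castSucc_injective _ h)
  · intro c
    rcases Fin.eq_castSucc_or_eq_last c with ⟨d, rfl⟩ | rfl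
    · rw [← hclass d]
      have key : ∀ v : V, ((if h : v ∈ S then Fin.last b
          else (φ' ⟨v, hmem h⟩).castSucc) = d.castSucc) → v ∈ Sᶜ := by
        intro v hv
        refine Finset.mem_compl.mpr ?_
        by_contra hvS
        simp only [dif_pos hvS] at hv
        exact absurd hv.symm (Fin.castSucc_lt_last _).ne
      refine Finset.card_bij' (fun v hv =>
          (⟨v, key v ((Finset.mem_filter.mp hv).2)⟩ : {x : V // x ∈ Sᶜ}))
        (fun w _ => w.val) ?_ ?_ ?_ ?_
      · intro v hv
        simp only [Finset.mem_filter] at hv ⊢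
        refine ⟨Finset.mem_univ _, ?_⟩
        have hvS : v ∉ S := by
          by_contra hvS
          simp only [dif_pos hvS] at hv
          exact absurd hv.2.symm (Fin.castSucc_lt_last _).ne
        simp only [dif_neg hvS] at hv
        exact Fin.castSucc_injective _ hv.2
      · intro w hw
        simp only [Finset.mem_filter] at hw ⊢
        refine ⟨Finset.mem_univ _, ?_⟩
        have hwS : w.val ∉ S := Finset.mem_compl.mp w.2
        simp only [dif_neg hwS]
        have : (⟨w.val, hmem hwS⟩ : {x : V // x ∈ Sᶜ}) = w := Subtype.ext rfl
        rw [this, hw.2]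
      · intro v hv; rfl
      · intro w hw; exact Subtype.ext rfl
    · have : Finset.univ.filter (fun v => (if h : v ∈ S then Fin.last b
          else (φ' ⟨v, hmem h⟩).castSucc) = Fin.last b) = S := by
        ext v
        simp only [Finset.mem_filter, Finset.mem_univ, true_and]
        by_cases hvS : v ∈ S
        · simp [hvS]
        · simp only [dif_neg hvS, hvS, iff_false]
          exact (Fin.castSucc_lt_last _).ne
      rw [this, hScard]


lemma step (K b : ℕ) {V : Type} [Fintype V] [DecidableEq V] (H : SimpleGraph V)
    [inst : DecidableRel H.Adj]
    (hV : Fintype.card V = (b+2) * (K+2))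
    (S : Finset V) (hScard : S.card = K+2)
    (hSind : ∀ x ∈ S, ∀ y ∈ S, ¬H.Adj x y)
    (hsumS : ((∑ x ∈ Sᶜ, ((H.degree x - 1) + (K+1)) / (K+2) : ℕ) : ℤ) ≤ ((b:ℤ)+1) - 2)
    (hrec : ∀ (V' : Type) [Fintype V'] [DecidableEq V'] (H' : SimpleGraph V')
      [DecidableRel H'.Adj],
      Fintype.card V' = (b+1) * (K+2) →
      ((∑ x : V', ((H'.degree x - 1) + (K+1)) / (K+2) : ℕ) : ℤ) ≤ ((b:ℤ)+1) - 2 →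
      ∃ φ : V' → Fin (b+1), (∀ x y, H'.Adj x y → φ x ≠ φ y) ∧
        ∀ c : Fin (b+1), (Finset.univ.filter (fun x => φ x = c)).card = K+2) :
    ∃ φ : V → Fin (b+2), (∀ x y, H.Adj x y → φ x ≠ φ y) ∧
      ∀ c : Fin (b+2), (Finset.univ.filter (fun x => φ x = c)).card = K+2 := by
  classical
  set H' : SimpleGraph {x : V // x ∈ Sᶜ} :=
    SimpleGraph.comap (Subtype.val : {x : V // x ∈ Sᶜ} → V) H with hH'
  haveI instD : DecidableRel H'.Adj := fun x y => inst x.val y.val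
  have hdegle : ∀ x : {v : V // v ∈ Sᶜ}, H'.degree x ≤ H.degree x.val := by
    intro x
    rw [← SimpleGraph.card_neighborFinset_eq_degree, ← SimpleGraph.card_neighborFinset_eq_degree]
    apply Finset.card_le_card_of_injOn Subtype.val
    · intro y hy
      rw [Finset.mem_coe, SimpleGraph.mem_neighborFinset] at hy ⊢
      exact hy
    · exact Subtype.val_injective.injOn
  have hcard' : Fintype.card {x : V // x ∈ Sᶜ} = (b+1) * (K+2) := by
    rw [Fintype.card_coe, Finset.card_compl, hV, hScard]
    have : (b+2) * (K+2) = (b+1)*(K+2) + (K+2) := by ring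
    omega
  have hsub : (∑ x : {v : V // v ∈ Sᶜ}, ((H'.degree x - 1) + (K+1)) / (K+2))
      ≤ ∑ x ∈ Sᶜ, ((H.degree x - 1) + (K+1)) / (K+2) := by
    calc (∑ x : {v : V // v ∈ Sᶜ}, ((H'.degree x - 1) + (K+1)) / (K+2))
        ≤ ∑ x : {v : V // v ∈ Sᶜ}, ((H.degree x.val - 1) + (K+1)) / (K+2) :=
          Finset.sum_le_sum (fun x _ => Nat.div_le_div_right (by have := hdegle x; omega))
      _ = ∑ x ∈ Sᶜ, ((H.degree x - 1) + (K+1)) / (K+2) :=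
          Finset.sum_coe_sort Sᶜ (fun v => ((H.degree v - 1) + (K+1)) / (K+2))
  have hsum' : ((∑ x : {v : V // v ∈ Sᶜ}, ((H'.degree x - 1) + (K+1)) / (K+2) : ℕ) : ℤ)
      ≤ ((b:ℤ)+1) - 2 := by omega
  obtain ⟨φ', hproper, hclass⟩ := hrec {x : V // x ∈ Sᶜ} H' hcard' hsum'
  exact extend_coloring H (b+1) (K+2) S hScard hSind φ' (fun x y h => hproper x y h) hclass


lemma main (K : ℕ) (a : ℕ) :
    ∀ (V : Type) [Fintype V] [DecidableEq V] (H : SimpleGraph V) [DecidableRel H.Adj],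
      Fintype.card V = a * (K+2) →
      ((∑ x : V, ((H.degree x - 1) + (K+1)) / (K+2) : ℕ) : ℤ) ≤ (a:ℤ) - 2 →
      ∃ φ : V → Fin a, (∀ x y, H.Adj x y → φ x ≠ φ y) ∧
        ∀ c : Fin a, (Finset.univ.filter (fun x => φ x = c)).card = K+2 := by
  induction a using Nat.strong_induction_on with
  | _ a IH =>
  intro V _ _ H _ hV hsum
  -- a ≥ 2
  have ha2 : 2 ≤ a := by
    have h0 : (0:ℤ) ≤ ((∑ x : V, ((H.degree x - 1) + (K+1)) / (K+2) : ℕ) : ℤ) := Int.natCast_nonneg _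
    omega
  obtain ⟨b, rfl⟩ : ∃ b, a = b + 2 := ⟨a - 2, by omega⟩
  have hsumN : (∑ x : V, ((H.degree x - 1) + (K+1)) / (K+2)) ≤ b := by omega
  have hrec : ∀ (V' : Type) [Fintype V'] [DecidableEq V'] (H' : SimpleGraph V')
      [DecidableRel H'.Adj],
      Fintype.card V' = (b+1) * (K+2) →
      ((∑ x : V', ((H'.degree x - 1) + (K+1)) / (K+2) : ℕ) : ℤ) ≤ ((b:ℤ)+1) - 2 →
      ∃ φ : V' → Fin (b+1), (∀ x y, H'.Adj x y → φ x ≠ φ y) ∧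
        ∀ c : Fin (b+1), (Finset.univ.filter (fun x => φ x = c)).card = K+2 := by
    intro V' _ _ H' _ h1 h2
    exact IH (b+1) (by omega) V' H' h1 (by exact_mod_cast h2)
  by_cases hex : ∃ x, 2 ≤ H.degree x
  · -- Case A : a vertex of degree ≥ 2 exists
    obtain ⟨x₀, hx₀⟩ := hex
    set t₀ := ((H.degree x₀ - 1) + (K+1)) / (K+2) with ht₀
    have hK2 : 0 < K + 2 := by omega
    have ht₀1 : 1 ≤ t₀ := (Nat.one_le_div_iff hK2).mpr (by omega)
    have hd₀ : H.degree x₀ ≤ (K+2) * t₀ + 1 := by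
      have h1 := Nat.div_add_mod ((H.degree x₀ - 1) + (K+1)) (K+2)
      have h2 := Nat.mod_lt ((H.degree x₀ - 1) + (K+1)) hK2
      rw [← ht₀] at h1
      generalize (K+2) * t₀ = P at *
      omega
    set B := Finset.univ.filter (fun y => y ≠ x₀ ∧ 2 ≤ H.degree y) with hB
    have hx₀B : x₀ ∉ B := by simp [hB]
    have hBsum : t₀ + B.card ≤ ∑ x : V, ((H.degree x - 1) + (K+1)) / (K+2) := by
      have h1 : ∑ x ∈ insert x₀ B, ((H.degree x - 1) + (K+1)) / (K+2)
          ≤ ∑ x : V, ((H.degree x - 1) + (K+1)) / (K+2) :=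
        Finset.sum_le_sum_of_subset (Finset.subset_univ _)
      rw [Finset.sum_insert hx₀B] at h1
      have h2 : B.card ≤ ∑ x ∈ B, ((H.degree x - 1) + (K+1)) / (K+2) := by
        calc B.card = ∑ _x ∈ B, 1 := by simp
          _ ≤ ∑ x ∈ B, ((H.degree x - 1) + (K+1)) / (K+2) := by
              refine Finset.sum_le_sum (fun y hy => (Nat.one_le_div_iff hK2).mpr ?_)
              have h3 : 2 ≤ H.degree y := by
                have := Finset.mem_filter.mp hy
                exact this.2.2
              omega
      omega
    have haB : t₀ + B.card + 2 ≤ b + 2 := by omega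
    set L := Finset.univ.filter (fun y => y ≠ x₀ ∧ ¬H.Adj x₀ y ∧ H.degree y ≤ 1) with hL
    have hcover : (Finset.univ : Finset V) ⊆ L ∪ (insert x₀ (H.neighborFinset x₀) ∪ B) := by
      intro y _
      simp only [Finset.mem_union, Finset.mem_insert, hL, hB, Finset.mem_filter,
        Finset.mem_univ, true_and, SimpleGraph.mem_neighborFinset]
      have h4 : H.degree y ≤ 1 ∨ 2 ≤ H.degree y := by omega
      by_cases h1 : y = x₀
      · tauto
      by_cases h2 : H.Adj x₀ y
      · tauto
      tauto
    have hLcard : (b+2) * (K+2) ≤ L.card + (1 + H.degree x₀ + B.card) := by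
      have h1 := Finset.card_le_card hcover
      have h2 := Finset.card_union_le L (insert x₀ (H.neighborFinset x₀) ∪ B)
      have h3 := Finset.card_union_le (insert x₀ (H.neighborFinset x₀)) B
      have h4 := Finset.card_insert_le x₀ (H.neighborFinset x₀)
      rw [Finset.card_univ, hV] at h1
      rw [SimpleGraph.card_neighborFinset_eq_degree] at h4
      omega
    have hLge : 2 * (K+1) ≤ L.card := by
      have e1 : ((b:ℤ)+2) * ((K:ℤ)+2) ≤ (L.card : ℤ) + (1 + (H.degree x₀:ℤ) + (B.card:ℤ)) := by
        exact_mod_cast hLcard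
      have e2 : (H.degree x₀ : ℤ) ≤ ((K:ℤ)+2) * (t₀:ℤ) + 1 := by exact_mod_cast hd₀
      have e3 : (t₀:ℤ) + (B.card:ℤ) + 2 ≤ (b:ℤ) + 2 := by exact_mod_cast haB
      have e4 : (1:ℤ) ≤ (t₀:ℤ) := by exact_mod_cast ht₀1
      have key : (0:ℤ) ≤ ((b:ℤ) + 2 - (t₀:ℤ) - 2) * ((K:ℤ)+1) := by
        apply mul_nonneg
        · omega
        · omega
      have : (2:ℤ) * ((K:ℤ)+1) ≤ (L.card : ℤ) := by nlinarith [key]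
      exact_mod_cast this
    obtain ⟨T, hTsub, hTcard, hTind⟩ := indep_pick H (K+1) L
      (fun x hx => ((Finset.mem_filter.mp hx).2.2.2)) (by omega)
    have hx₀T : x₀ ∉ T := fun h => ((Finset.mem_filter.mp (hTsub h)).2.1 rfl)
    set S := insert x₀ T with hS
    have hScard : S.card = K + 2 := by
      rw [hS, Finset.card_insert_of_notMem hx₀T, hTcard]
    have hSind : ∀ x ∈ S, ∀ y ∈ S, ¬H.Adj x y := by
      have hnadj : ∀ z ∈ T, ¬H.Adj x₀ z := fun z hz =>
        (Finset.mem_filter.mp (hTsub hz)).2.2.1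
      intro x hx y hy hadj
      rcases Finset.mem_insert.mp hx with hx' | hx'
      · rcases Finset.mem_insert.mp hy with hy' | hy'
        · exact H.irrefl (hx' ▸ hy' ▸ hadj)
        · exact hnadj y hy' (hx' ▸ hadj)
      · rcases Finset.mem_insert.mp hy with hy' | hy'
        · exact hnadj x hx' (hy' ▸ hadj).symm
        · exact hTind x hx' y hy' hadj
    -- sum bound on the complement
    have hx₀S : x₀ ∈ S := Finset.mem_insert_self _ _
    have hsingle : t₀ ≤ ∑ x ∈ S, ((H.degree x - 1) + (K+1)) / (K+2) :=
      Finset.single_le_sum (f := fun x => ((H.degree x - 1) + (K+1)) / (K+2))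
        (fun i _ => Nat.zero_le _) hx₀S
    have htotal : (∑ x ∈ S, ((H.degree x - 1) + (K+1)) / (K+2))
        + ∑ x ∈ Sᶜ, ((H.degree x - 1) + (K+1)) / (K+2)
        = ∑ x : V, ((H.degree x - 1) + (K+1)) / (K+2) :=
      Finset.sum_add_sum_compl S _
    have hsumS : ((∑ x ∈ Sᶜ, ((H.degree x - 1) + (K+1)) / (K+2) : ℕ) : ℤ) ≤ ((b:ℤ)+1) - 2 := by
      omega
    exact step K b H hV S hScard hSind hsumS hrec
  · -- Case B : all degrees ≤ 1
    push_neg at hex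
    have hdeg1 : ∀ x, H.degree x ≤ 1 := fun x => by have := hex x; omega
    have hterm0 : ∀ x : V, ((H.degree x - 1) + (K+1)) / (K+2) = 0 := fun x =>
      Nat.div_eq_of_lt (by have := hdeg1 x; omega)
    rcases Nat.eq_zero_or_pos b with rfl | hb
    · -- a = 2 : covering construction
      have huniq : ∀ e ∈ H.edgeFinset, ∀ f ∈ H.edgeFinset, ∀ v : V, v ∈ e → v ∈ f → e = f := by
        intro e he f hf v hve hvf
        rw [SimpleGraph.mem_edgeFinset] at he hf
        obtain ⟨x, rfl⟩ := Sym2.mem_iff_exists.mp hve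
        obtain ⟨y, rfl⟩ := Sym2.mem_iff_exists.mp hvf
        rw [SimpleGraph.mem_edgeSet] at he hf
        have hx : x ∈ H.neighborFinset v := (H.mem_neighborFinset _ _).mpr he
        have hy : y ∈ H.neighborFinset v := (H.mem_neighborFinset _ _).mpr hf
        have hcard : (H.neighborFinset v).card ≤ 1 := by
          rw [SimpleGraph.card_neighborFinset_eq_degree]; exact hdeg1 v
        rw [Finset.card_le_one.mp hcard x hx y hy]
      set S₀ := H.edgeFinset.image (fun e => e.out.1) with hS₀
      have hS₀card : S₀.card = H.edgeFinset.card := by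
        rw [hS₀]
        apply Finset.card_image_of_injOn
        intro e he f hf hef
        have hef' : e.out.1 = f.out.1 := hef
        exact huniq e he f hf e.out.1 (Sym2.out_fst_mem e)
          (by rw [hef']; exact Sym2.out_fst_mem f)
      have hS₀pos : ∀ v ∈ S₀, 0 < H.degree v := by
        intro v hv
        rw [hS₀, Finset.mem_image] at hv
        obtain ⟨e, he, rfl⟩ := hv
        have hmem : e.out.1 ∈ e := Sym2.out_fst_mem e
        obtain ⟨y, hey⟩ := Sym2.mem_iff_exists.mp hmem
        rw [SimpleGraph.mem_edgeFinset, hey, SimpleGraph.mem_edgeSet] at he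
        exact (H.degree_pos_iff_exists_adj _).mpr ⟨y, he⟩
      have hS₀ind : ∀ x ∈ S₀, ∀ y ∈ S₀, ¬H.Adj x y := by
        intro x hx y hy hadj
        rw [hS₀, Finset.mem_image] at hx hy
        obtain ⟨e, he, rfl⟩ := hx
        obtain ⟨f, hf, rfl⟩ := hy
        have hg : s(e.out.1, f.out.1) ∈ H.edgeFinset := by
          rw [SimpleGraph.mem_edgeFinset, SimpleGraph.mem_edgeSet]; exact hadj
        have h1 : e = s(e.out.1, f.out.1) :=
          huniq e he _ hg e.out.1 (Sym2.out_fst_mem e) (Sym2.mem_iff.mpr (Or.inl rfl))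
        have h2 : f = s(e.out.1, f.out.1) :=
          huniq f hf _ hg f.out.1 (Sym2.out_fst_mem f) (Sym2.mem_iff.mpr (Or.inr rfl))
        have : e = f := h1.trans h2.symm
        rw [this] at hadj
        exact H.irrefl hadj
      have hcover0 : ∀ x y : V, H.Adj x y → x ∈ S₀ ∨ y ∈ S₀ := by
        intro x y hadj
        have he : s(x, y) ∈ H.edgeFinset := by
          rw [SimpleGraph.mem_edgeFinset, SimpleGraph.mem_edgeSet]; exact hadj
        have hmem : (s(x,y)).out.1 ∈ s(x, y) := Sym2.out_fst_mem _
        rcases Sym2.mem_iff.mp hmem with h | h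
        · left; rw [hS₀, Finset.mem_image]; exact ⟨s(x,y), he, h⟩
        · right; rw [hS₀, Finset.mem_image]; exact ⟨s(x,y), he, h⟩
      have hhs : ∑ v : V, H.degree v = 2 * H.edgeFinset.card :=
        SimpleGraph.sum_degrees_eq_twice_card_edges H
      have hdegsum : ∑ v : V, H.degree v ≤ Fintype.card V := by
        calc ∑ v : V, H.degree v ≤ ∑ _v : V, 1 := Finset.sum_le_sum (fun i _ => hdeg1 i)
          _ = Fintype.card V := by simp
      have hm : H.edgeFinset.card ≤ K + 2 := by omega
      set I := Finset.univ.filter (fun v => H.degree v = 0) with hI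
      have hIcard : (K+2) - H.edgeFinset.card ≤ I.card := by
        have h1 : (Finset.univ.filter (fun v => ¬ H.degree v = 0)).card ≤ ∑ v : V, H.degree v := by
          calc (Finset.univ.filter (fun v => ¬ H.degree v = 0)).card
              = ∑ _x ∈ Finset.univ.filter (fun v => ¬ H.degree v = 0), 1 := by simp
            _ ≤ ∑ x ∈ Finset.univ.filter (fun v => ¬ H.degree v = 0), H.degree x :=
                Finset.sum_le_sum (fun i hi => by
                  have := (Finset.mem_filter.mp hi).2; omega)
            _ ≤ ∑ v : V, H.degree v := Finset.sum_le_sum_of_subset (Finset.filter_subset _ _)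
        have h2 : I.card + (Finset.univ.filter (fun v => ¬ H.degree v = 0)).card
            = Fintype.card V := by
          rw [← Finset.card_univ, hI]
          exact Finset.card_filter_add_card_filter_not _
        omega
      obtain ⟨P, hPsub, hPcard⟩ := Finset.exists_subset_card_eq (s := I) (n := (K+2) - H.edgeFinset.card) hIcard
      have hdisj : Disjoint S₀ P := by
        rw [Finset.disjoint_left]
        intro v hv hvP
        have h1 := hS₀pos v hv
        have h2 := (Finset.mem_filter.mp (hPsub hvP)).2
        omega
      set S := S₀ ∪ P with hS
      have hScard : S.card = K + 2 := by
        rw [hS, Finset.card_union_of_disjoint hdisj, hS₀card, hPcard]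
        omega
      have hPdeg : ∀ v ∈ P, H.degree v = 0 := fun v hv => (Finset.mem_filter.mp (hPsub hv)).2
      have hSind : ∀ x ∈ S, ∀ y ∈ S, ¬H.Adj x y := by
        intro x hx y hy hadj
        rcases Finset.mem_union.mp hx with hx' | hx'
        · rcases Finset.mem_union.mp hy with hy' | hy'
          · exact hS₀ind x hx' y hy' hadj
          · have := (H.degree_pos_iff_exists_adj _).mpr ⟨x, hadj.symm⟩
            have := hPdeg y hy'
            omega
        · have := (H.degree_pos_iff_exists_adj _).mpr ⟨y, hadj⟩
          have := hPdeg x hx'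
          omega
      have hcard'' : Fintype.card {x : V // x ∈ Sᶜ} = K + 2 := by
        rw [Fintype.card_coe, Finset.card_compl, hV, hScard]
        omega
      have hproper : ∀ x y : {x : V // x ∈ Sᶜ}, H.Adj x.val y.val →
          (fun _ : {x : V // x ∈ Sᶜ} => (0 : Fin 1)) x ≠ (fun _ => (0 : Fin 1)) y := by
        intro x y hadj _
        rcases hcover0 x.val y.val hadj with h | h
        · exact (Finset.mem_compl.mp x.2) (Finset.mem_union_left _ h)
        · exact (Finset.mem_compl.mp y.2) (Finset.mem_union_left _ h)
      have hclass : ∀ c : Fin 1, (Finset.univ.filter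
          (fun x : {x : V // x ∈ Sᶜ} => (fun _ => (0 : Fin 1)) x = c)).card = K + 2 := by
        intro c
        have : (Finset.univ.filter
            (fun x : {x : V // x ∈ Sᶜ} => (fun _ => (0 : Fin 1)) x = c)) = Finset.univ := by
          ext x
          simp [Subsingleton.elim (0 : Fin 1) c]
        rw [this, Finset.card_univ, hcard'']
      exact extend_coloring H 1 (K+2) S hScard hSind (fun _ => (0 : Fin 1)) hproper hclass
    · -- a ≥ 3 : pick any independent set of size K+2
      have hn : 2 * (K+2) ≤ Fintype.card V + 1 := by
        have : 2 * (K+2) ≤ (b+2) * (K+2) := Nat.mul_le_mul_right _ (by omega)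
        omega
      obtain ⟨T, _, hTcard, hTind⟩ := indep_pick H (K+2) Finset.univ
        (fun x _ => hdeg1 x) (by rwa [Finset.card_univ])
      have hsumS : ((∑ x ∈ Tᶜ, ((H.degree x - 1) + (K+1)) / (K+2) : ℕ) : ℤ)
          ≤ ((b:ℤ)+1) - 2 := by
        have : (∑ x ∈ Tᶜ, ((H.degree x - 1) + (K+1)) / (K+2)) = 0 :=
          Finset.sum_eq_zero (fun x _ => hterm0 x)
        rw [this]
        omega
      exact step K b H hV T hTcard (fun x hx y hy => hTind x hx y hy) hsumS hrec


/-- Lemma 4.3(i): if `k ≥ 3`, `a ≥ 1` and `H` is a graph of order `a(k-1)` with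
`∑_x ⌈(deg_H(x) - 1)/(k-1)⌉ ≤ a - 2`, then `H` has a proper colouring with `a` colours
in which every colour class has exactly `k - 1` vertices. (Here
`⌈(d-1)/(k-1)⌉ = ((d - 1) + (k - 2))/(k - 1)` in natural numbers, which equals the
real ceiling for every `d ≥ 0`, and the bound `a - 2` is taken in `ℤ`.) -/
theorem equitable_colouring_from_degree_sum_minus_one (k a : ℕ) (hk : 3 ≤ k) (ha : 1 ≤ a)
    (V : Type) [Fintype V] [DecidableEq V] (hV : Fintype.card V = a * (k - 1))
    (H : SimpleGraph V) [DecidableRel H.Adj]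
    (hsum : ((∑ x : V, ((H.degree x - 1) + (k - 2)) / (k - 1) : ℕ) : ℤ) ≤ (a : ℤ) - 2) :
    ∃ φ : V → Fin a,
      (∀ x y : V, H.Adj x y → φ x ≠ φ y) ∧
      ∀ c : Fin a, (Finset.univ.filter (fun x => φ x = c)).card = k - 1 := by
  have e1 : k - 1 = (k - 3) + 2 := by omega
  have e2 : k - 2 = (k - 3) + 1 := by omega
  rw [e1] at hV
  simp only [e1, e2] at hsum ⊢
  exact main (k - 3) a V H hV hsum
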